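/- arXiv:1703.00038 — 2 statements merged into one kernel-verified Lean document; each statement's English description precedes it below -/
import Mathlib

section
/- Let Q(x,y)=ax²+hxy+by² be a definite integer binary quadratic form (i.e. a,h,b ∈ ℤ with discriminant D=h²−4ab<0). Then for every sequence w:ℕ→{L,R}, the Lyapunov exponent of the values of Q along the path w is twice the matrix Lyapunov exponent: Λ_Q(w) = 2·Λ(w). -/
open Filter Matrix

noncomputable section

def Lm : Matrix (Fin 2) (Fin 2) ℤ := !![1, 1; 0, 1]

def Rm : Matrix (Fin 2) (Fin 2) ℤ := !![1, 0; 1, 1]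

/-- `pathMat w n = w 0 * w 1 * ⋯ * w (n-1)`. -/
def pathMat (w : ℕ → Matrix (Fin 2) (Fin 2) ℤ) (n : ℕ) : Matrix (Fin 2) (Fin 2) ℤ :=
  ((List.range n).map w).prod

/-- The value of the form `a x² + h x y + b y²`. -/
def Qval (a h b x y : ℤ) : ℤ := a * x ^ 2 + h * x * y + b * y ^ 2

/-- `|Qₙ(w)| = max(|aₙ|, |bₙ|, |cₙ|)` where the values are taken at the n-th superbase. -/
def Qnorm (a h b : ℤ) (w : ℕ → Matrix (Fin 2) (Fin 2) ℤ) (n : ℕ) : ℤ :=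
  max |Qval a h b (pathMat w n 0 0) (pathMat w n 1 0)|
    (max |Qval a h b (pathMat w n 0 1) (pathMat w n 1 1)|
      |Qval a h b (pathMat w n 0 0 + pathMat w n 0 1) (pathMat w n 1 0 + pathMat w n 1 1)|)

/-- The Lyapunov exponent `Λ_Q(w)` of the values of `Q` along the path `w`. -/
def LyapQ (a h b : ℤ) (w : ℕ → Matrix (Fin 2) (Fin 2) ℤ) : ℝ :=
  limsup (fun n : ℕ => Real.log (Qnorm a h b w n : ℝ) / (n : ℝ)) atTop

/-- The matrix Lyapunov exponent `Λ(w)`, via the spectral radius over ℂ. -/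
def Lyap (w : ℕ → Matrix (Fin 2) (Fin 2) ℤ) : ℝ :=
  limsup (fun n : ℕ =>
    Real.log ((spectralRadius ℂ ((pathMat w n).map ((↑) : ℤ → ℂ))).toReal) / (n : ℝ)) atTop



lemma pathMat_zero (w : ℕ → Matrix (Fin 2) (Fin 2) ℤ) : pathMat w 0 = 1 := rfl

lemma pathMat_succ (w : ℕ → Matrix (Fin 2) (Fin 2) ℤ) (n : ℕ) :
    pathMat w (n+1) = pathMat w n * w n := by
  simp [pathMat, List.range_succ]

lemma mul_Lm (A : Matrix (Fin 2) (Fin 2) ℤ) :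
    (A * Lm) 0 0 = A 0 0 ∧ (A * Lm) 0 1 = A 0 0 + A 0 1 ∧
    (A * Lm) 1 0 = A 1 0 ∧ (A * Lm) 1 1 = A 1 0 + A 1 1 := by
  simp [Lm, Matrix.mul_apply, Fin.sum_univ_two]

lemma mul_Rm (A : Matrix (Fin 2) (Fin 2) ℤ) :
    (A * Rm) 0 0 = A 0 0 + A 0 1 ∧ (A * Rm) 0 1 = A 0 1 ∧
    (A * Rm) 1 0 = A 1 0 + A 1 1 ∧ (A * Rm) 1 1 = A 1 1 := by
  simp [Rm, Matrix.mul_apply, Fin.sum_univ_two]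

structure PathFacts (A : Matrix (Fin 2) (Fin 2) ℤ) : Prop where
  hp : 1 ≤ A 0 0
  hq : 0 ≤ A 0 1
  hr : 0 ≤ A 1 0
  hs : 1 ≤ A 1 1
  hdet : A 0 0 * A 1 1 - A 0 1 * A 1 0 = 1

lemma pathFacts (w : ℕ → Matrix (Fin 2) (Fin 2) ℤ) (hw : ∀ n, w n = Lm ∨ w n = Rm) :
    ∀ n, PathFacts (pathMat w n) := by
  intro n
  induction n with
  | zero => constructor <;> simp [pathMat_zero, Matrix.one_apply]
  | succ n ih =>
    rw [pathMat_succ]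
    rcases hw n with hwn | hwn <;> rw [hwn]
    · obtain ⟨e1, e2, e3, e4⟩ := mul_Lm (pathMat w n)
      constructor <;> simp only [e1, e2, e3, e4] <;>
        first
        | linarith [ih.hp, ih.hq, ih.hr, ih.hs]
        | nlinarith [ih.hdet]
    · obtain ⟨e1, e2, e3, e4⟩ := mul_Rm (pathMat w n)
      constructor <;> simp only [e1, e2, e3, e4] <;>
        first
        | linarith [ih.hp, ih.hq, ih.hr, ih.hs]
        | nlinarith [ih.hdet]

section
def trA (w : ℕ → Matrix (Fin 2) (Fin 2) ℤ) (n : ℕ) : ℤ :=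
  pathMat w n 0 0 + pathMat w n 1 1

def MxA (w : ℕ → Matrix (Fin 2) (Fin 2) ℤ) (n : ℕ) : ℤ :=
  max (max (pathMat w n 0 0) (pathMat w n 0 1)) (max (pathMat w n 1 0) (pathMat w n 1 1))

lemma entries_le_mx (w : ℕ → Matrix (Fin 2) (Fin 2) ℤ) (n : ℕ) :
    pathMat w n 0 0 ≤ MxA w n ∧ pathMat w n 0 1 ≤ MxA w n ∧
    pathMat w n 1 0 ≤ MxA w n ∧ pathMat w n 1 1 ≤ MxA w n := by
  unfold MxA
  refine ⟨?_, ?_, ?_, ?_⟩ <;> simp [le_max_iff, le_refl]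

variable {w : ℕ → Matrix (Fin 2) (Fin 2) ℤ}

lemma two_le_tr (hw : ∀ n, w n = Lm ∨ w n = Rm) (n : ℕ) : 2 ≤ trA w n := by
  have h := pathFacts w hw n
  unfold trA; linarith [h.hp, h.hs]

lemma tr_mono (hw : ∀ n, w n = Lm ∨ w n = Rm) (n : ℕ) : trA w n ≤ trA w (n+1) := by
  have h := pathFacts w hw n
  unfold trA
  rw [pathMat_succ]
  rcases hw n with hwn | hwn <;> rw [hwn]
  · obtain ⟨e1, e2, e3, e4⟩ := mul_Lm (pathMat w n)
    rw [e1, e4]; linarith [h.hr]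
  · obtain ⟨e1, e2, e3, e4⟩ := mul_Rm (pathMat w n)
    rw [e1, e4]; linarith [h.hq]

lemma tr_le_two_mx (n : ℕ) : trA w n ≤ 2 * MxA w n := by
  unfold trA MxA
  have h1 : pathMat w n 0 0 ≤ max (pathMat w n 0 0) (pathMat w n 0 1) := le_max_left _ _
  have h2 : pathMat w n 1 1 ≤ max (pathMat w n 1 0) (pathMat w n 1 1) := le_max_right _ _
  have h3 := le_max_left (max (pathMat w n 0 0) (pathMat w n 0 1)) (max (pathMat w n 1 0) (pathMat w n 1 1))
  have h4 := le_max_right (max (pathMat w n 0 0) (pathMat w n 0 1)) (max (pathMat w n 1 0) (pathMat w n 1 1))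
  linarith

lemma one_le_mx (hw : ∀ n, w n = Lm ∨ w n = Rm) (n : ℕ) : 1 ≤ MxA w n := by
  have h := pathFacts w hw n
  unfold MxA
  have := h.hp
  have h1 : pathMat w n 0 0 ≤ max (pathMat w n 0 0) (pathMat w n 0 1) := le_max_left _ _
  have h3 := le_max_left (max (pathMat w n 0 0) (pathMat w n 0 1)) (max (pathMat w n 1 0) (pathMat w n 1 1))
  linarith

lemma mx_succ (hw : ∀ n, w n = Lm ∨ w n = Rm) (n : ℕ) : MxA w (n+1) ≤ MxA w n + trA w (n+1) := by
  have h := pathFacts w hw n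
  obtain ⟨m1, m2, m3, m4⟩ := entries_le_mx w n
  set M := MxA w n with hMdef
  unfold MxA trA
  rw [pathMat_succ]
  rcases hw n with hwn | hwn <;> rw [hwn]
  · obtain ⟨e1, e2, e3, e4⟩ := mul_Lm (pathMat w n)
    simp only [e1, e2, e3, e4, max_le_iff]
    refine ⟨⟨?_, ?_⟩, ?_, ?_⟩ <;> linarith [h.hp, h.hq, h.hr, h.hs, m1, m2, m3, m4]
  · obtain ⟨e1, e2, e3, e4⟩ := mul_Rm (pathMat w n)
    simp only [e1, e2, e3, e4, max_le_iff]
    refine ⟨⟨?_, ?_⟩, ?_, ?_⟩ <;> linarith [h.hp, h.hq, h.hr, h.hs, m1, m2, m3, m4]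

lemma mx_le (hw : ∀ n, w n = Lm ∨ w n = Rm) (n : ℕ) : MxA w n ≤ (n+1 : ℤ) * trA w n := by
  induction n with
  | zero =>
    have h1 := one_le_mx hw 0
    have h2 : MxA w 0 = 1 := by
      unfold MxA
      simp [pathMat_zero, Matrix.one_apply]
    rw [h2]; push_cast; linarith [two_le_tr hw 0]
  | succ n ih =>
    have h1 := mx_succ hw n
    have h2 := tr_mono hw n
    have h3 := two_le_tr hw n
    push_cast
    push_cast at ih
    nlinarith

lemma mx_pow (hw : ∀ n, w n = Lm ∨ w n = Rm) (n : ℕ) : MxA w n ≤ 2 ^ n := by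
  induction n with
  | zero =>
    have h2 : MxA w 0 = 1 := by unfold MxA; simp [pathMat_zero, Matrix.one_apply]
    simp [h2]
  | succ n ih =>
    have h := pathFacts w hw n
    obtain ⟨m1, m2, m3, m4⟩ := entries_le_mx w n
    have key : MxA w (n+1) ≤ 2 * MxA w n := by
      set M := MxA w n with hMdef
      unfold MxA
      rw [pathMat_succ]
      rcases hw n with hwn | hwn <;> rw [hwn]
      · obtain ⟨e1, e2, e3, e4⟩ := mul_Lm (pathMat w n)
        simp only [e1, e2, e3, e4, max_le_iff]
        refine ⟨⟨?_, ?_⟩, ?_, ?_⟩ <;>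
          linarith [one_le_mx hw n, m1, m2, m3, m4]
      · obtain ⟨e1, e2, e3, e4⟩ := mul_Rm (pathMat w n)
        simp only [e1, e2, e3, e4, max_le_iff]
        refine ⟨⟨?_, ?_⟩, ?_, ?_⟩ <;>
          linarith [one_le_mx hw n, m1, m2, m3, m4]
    calc MxA w (n+1) ≤ 2 * MxA w n := key
    _ ≤ 2 * 2 ^ n := by linarith
    _ = 2 ^ (n+1) := by ring

end


lemma specrad_fin_two (M : Matrix (Fin 2) (Fin 2) ℂ) (t : ℝ) (ht : 2 ≤ t)
    (htr : M 0 0 + M 1 1 = (t : ℂ)) (hdet : M 0 0 * M 1 1 - M 0 1 * M 1 0 = 1) :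
    (spectralRadius ℂ M).toReal = (t + Real.sqrt (t ^ 2 - 4)) / 2 := by
  have ht4 : (0:ℝ) ≤ t ^ 2 - 4 := by nlinarith
  set d := Real.sqrt (t ^ 2 - 4) with hd
  have hd0 : 0 ≤ d := Real.sqrt_nonneg _
  have hd2 : d ^ 2 = t ^ 2 - 4 := Real.sq_sqrt ht4
  have hdt : d ≤ t := by nlinarith
  set lp : ℝ := (t + d) / 2 with hlp
  set lm : ℝ := (t - d) / 2 with hlm
  have hsum : lp + lm = t := by rw [hlp, hlm]; ring
  have hprod : lp * lm = 1 := by rw [hlp, hlm]; nlinarith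
  have hlm0 : 0 ≤ lm := by rw [hlm]; linarith
  have hlp1 : lm ≤ lp := by rw [hlp, hlm]; linarith
  have hspec : spectrum ℂ M = {(lp : ℂ), (lm : ℂ)} := by
    ext z
    rw [spectrum.mem_iff, Matrix.isUnit_iff_isUnit_det, isUnit_iff_ne_zero, not_not]
    have hdet2 : (algebraMap ℂ (Matrix (Fin 2) (Fin 2) ℂ) z - M).det
        = (z - lp) * (z - lm) := by
      rw [Matrix.det_fin_two]
      simp only [Matrix.sub_apply, Matrix.algebraMap_matrix_apply]
      norm_num
      have : (z - M 0 0) * (z - M 1 1) - M 0 1 * M 1 0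
          = z ^ 2 - (M 0 0 + M 1 1) * z + (M 0 0 * M 1 1 - M 0 1 * M 1 0) := by ring
      rw [this, htr, hdet]
      have h1 : ((t:ℂ)) = (lp : ℂ) + (lm : ℂ) := by
        exact_mod_cast hsum.symm
      have h2 : ((lp : ℂ)) * (lm : ℂ) = 1 := by
        exact_mod_cast hprod
      rw [h1, ← h2]; ring
    rw [hdet2, mul_eq_zero, sub_eq_zero, sub_eq_zero]
    simp [Set.mem_insert_iff, Set.mem_singleton_iff]
  rw [spectralRadius, hspec, iSup_pair]
  have h1 : ‖(lm : ℂ)‖₊ ≤ ‖(lp : ℂ)‖₊ := by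
    simp only [← NNReal.coe_le_coe, coe_nnnorm, Complex.norm_real]
    rw [Real.norm_of_nonneg hlm0, Real.norm_of_nonneg (hlm0.trans hlp1)]
    exact hlp1
  rw [sup_eq_left.mpr (by exact_mod_cast h1)]
  simp only [ENNReal.coe_toReal, coe_nnnorm, Complex.norm_real]
  rw [Real.norm_of_nonneg (hlm0.trans hlp1), hlp]



lemma qval_upper (a h b x y : ℤ) :
    |Qval a h b x y| ≤ (|a| + |h| + |b|) * (max |x| |y|) ^ 2 := by
  set m := max |x| |y| with hm
  have hx : |x| ≤ m := le_max_left _ _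
  have hy : |y| ≤ m := le_max_right _ _
  have hx0 : 0 ≤ |x| := abs_nonneg _
  have hy0 : 0 ≤ |y| := abs_nonneg _
  have h1 : |Qval a h b x y| ≤ |a * x ^ 2| + |h * x * y| + |b * y ^ 2| :=
    (abs_add_three _ _ _)
  have e1 : |a * x ^ 2| = |a| * |x| ^ 2 := by rw [abs_mul, abs_pow]
  have e2 : |h * x * y| = |h| * |x| * |y| := by rw [abs_mul, abs_mul]
  have e3 : |b * y ^ 2| = |b| * |y| ^ 2 := by rw [abs_mul, abs_pow]
  rw [e1, e2, e3] at h1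
  have hm0 : 0 ≤ m := le_trans hx0 hx
  have hxm : |x| * |x| ≤ m * m := mul_le_mul hx hx hx0 hm0
  have hym : |y| * |y| ≤ m * m := mul_le_mul hy hy hy0 hm0
  have hxy : |x| * |y| ≤ m * m := mul_le_mul hx hy hy0 hm0
  have q1 : |a| * |x| ^ 2 ≤ |a| * m ^ 2 := by
    rw [pow_two, pow_two]; exact mul_le_mul_of_nonneg_left hxm (abs_nonneg a)
  have q2 : |h| * |x| * |y| ≤ |h| * m ^ 2 := by
    rw [pow_two, mul_assoc]; exact mul_le_mul_of_nonneg_left hxy (abs_nonneg h)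
  have q3 : |b| * |y| ^ 2 ≤ |b| * m ^ 2 := by
    rw [pow_two, pow_two]; exact mul_le_mul_of_nonneg_left hym (abs_nonneg b)
  nlinarith

lemma qval_lower_x (a h b x y : ℤ) :
    (4 * a * b - h ^ 2) * x ^ 2 ≤ 4 * |b| * |Qval a h b x y| := by
  have key : 4 * b * Qval a h b x y = (h * x + 2 * b * y) ^ 2 + (4 * a * b - h ^ 2) * x ^ 2 := by
    unfold Qval; ring
  have h0 : (4 * a * b - h ^ 2) * x ^ 2 ≤ 4 * b * Qval a h b x y := by
    nlinarith [sq_nonneg (h * x + 2 * b * y)]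
  calc (4 * a * b - h ^ 2) * x ^ 2 ≤ 4 * b * Qval a h b x y := h0
    _ ≤ |4 * b * Qval a h b x y| := le_abs_self _
    _ = 4 * |b| * |Qval a h b x y| := by
        rw [abs_mul, abs_mul]; norm_num

lemma qval_lower_y (a h b x y : ℤ) :
    (4 * a * b - h ^ 2) * y ^ 2 ≤ 4 * |a| * |Qval a h b x y| := by
  have key : 4 * a * Qval a h b x y = (2 * a * x + h * y) ^ 2 + (4 * a * b - h ^ 2) * y ^ 2 := by
    unfold Qval; ring
  have h0 : (4 * a * b - h ^ 2) * y ^ 2 ≤ 4 * a * Qval a h b x y := by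
    nlinarith [sq_nonneg (2 * a * x + h * y)]
  calc (4 * a * b - h ^ 2) * y ^ 2 ≤ 4 * a * Qval a h b x y := h0
    _ ≤ |4 * a * Qval a h b x y| := le_abs_self _
    _ = 4 * |a| * |Qval a h b x y| := by
        rw [abs_mul, abs_mul]; norm_num


section


variable {w : ℕ → Matrix (Fin 2) (Fin 2) ℤ}

lemma qnorm_upper (a h b : ℤ) (hw : ∀ n, w n = Lm ∨ w n = Rm) (n : ℕ) :
    Qnorm a h b w n ≤ 4 * (|a| + |h| + |b|) * (MxA w n) ^ 2 := by
  have hf := pathFacts w hw n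
  obtain ⟨m1, m2, m3, m4⟩ := entries_le_mx w n
  set M := MxA w n with hM
  have hM1 : 1 ≤ M := one_le_mx hw n
  have hK0 : 0 ≤ |a| + |h| + |b| := by positivity
  set K := |a| + |h| + |b| with hK
  have hp0 : 0 ≤ pathMat w n 0 0 := by linarith [hf.hp]
  have hq0 := hf.hq
  have hr0 := hf.hr
  have hs0 : 0 ≤ pathMat w n 1 1 := by linarith [hf.hs]
  have bound : ∀ x y : ℤ, 0 ≤ x → 0 ≤ y → x ≤ 2*M → y ≤ 2*M →
      |Qval a h b x y| ≤ 4 * K * M ^ 2 := by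
    intro x y hx hy hx2 hy2
    have h1 := qval_upper a h b x y
    have hmx : max |x| |y| ≤ 2 * M := by
      rw [abs_of_nonneg hx, abs_of_nonneg hy]; exact max_le hx2 hy2
    have hmx0 : 0 ≤ max |x| |y| := le_trans (abs_nonneg x) (le_max_left _ _)
    have h2 : (max |x| |y|) ^ 2 ≤ (2*M) ^ 2 := by nlinarith
    calc |Qval a h b x y| ≤ K * (max |x| |y|) ^ 2 := h1
      _ ≤ K * (2*M) ^ 2 := mul_le_mul_of_nonneg_left h2 hK0
      _ = 4 * K * M ^ 2 := by ring
  unfold Qnorm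
  refine max_le (bound _ _ hp0 hr0 (by linarith) (by linarith))
    (max_le (bound _ _ hq0 hs0 (by linarith) (by linarith))
      (bound _ _ (by linarith) (by linarith) (by linarith) (by linarith)))

lemma qnorm_lower (a h b : ℤ) (hw : ∀ n, w n = Lm ∨ w n = Rm) (n : ℕ) :
    (4 * a * b - h ^ 2) * (MxA w n) ^ 2 ≤ 4 * (max |a| |b|) * Qnorm a h b w n := by
  have hf := pathFacts w hw n
  set p := pathMat w n 0 0
  set q := pathMat w n 0 1
  set r := pathMat w n 1 0
  set s := pathMat w n 1 1
  set E := max |a| |b| with hE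
  have hEa : |a| ≤ E := le_max_left _ _
  have hEb : |b| ≤ E := le_max_right _ _
  have hE0 : 0 ≤ E := le_trans (abs_nonneg a) hEa
  have hQ1 : |Qval a h b p r| ≤ Qnorm a h b w n := le_max_left _ _
  have hQ2 : |Qval a h b q s| ≤ Qnorm a h b w n :=
    le_trans (le_max_left _ _) (le_max_right _ _)
  have hQn0 : 0 ≤ Qnorm a h b w n := le_trans (abs_nonneg _) hQ1
  have step : ∀ c Q : ℤ, |c| ≤ E → 0 ≤ Q → Q ≤ Qnorm a h b w n →
      4 * |c| * Q ≤ 4 * E * Qnorm a h b w n := by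
    intro c Q hc hQ hQn
    have := mul_le_mul hc hQn hQ hE0
    nlinarith [abs_nonneg c]
  have k1 : (4 * a * b - h ^ 2) * p ^ 2 ≤ 4 * E * Qnorm a h b w n :=
    le_trans (qval_lower_x a h b p r) (step b _ hEb (abs_nonneg _) hQ1)
  have k2 : (4 * a * b - h ^ 2) * r ^ 2 ≤ 4 * E * Qnorm a h b w n :=
    le_trans (qval_lower_y a h b p r) (step a _ hEa (abs_nonneg _) hQ1)
  have k3 : (4 * a * b - h ^ 2) * q ^ 2 ≤ 4 * E * Qnorm a h b w n :=
    le_trans (qval_lower_x a h b q s) (step b _ hEb (abs_nonneg _) hQ2)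
  have k4 : (4 * a * b - h ^ 2) * s ^ 2 ≤ 4 * E * Qnorm a h b w n :=
    le_trans (qval_lower_y a h b q s) (step a _ hEa (abs_nonneg _) hQ2)
  have hcase : MxA w n = p ∨ MxA w n = q ∨ MxA w n = r ∨ MxA w n = s := by
    unfold MxA
    rcases max_choice (max p q) (max r s) with H | H <;> rw [H]
    · rcases max_choice p q with H2 | H2 <;> rw [H2] <;> tauto
    · rcases max_choice r s with H2 | H2 <;> rw [H2] <;> tauto
  rcases hcase with H | H | H | H <;> rw [H] <;> assumption

lemma one_le_qnorm (a h b : ℤ) (hdef : h ^ 2 - 4 * a * b < 0)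
    (hw : ∀ n, w n = Lm ∨ w n = Rm) (n : ℕ) : 1 ≤ Qnorm a h b w n := by
  have h1 := qnorm_lower a h b hw n
  have hM1 : 1 ≤ MxA w n := one_le_mx hw n
  have hE0 : (0:ℤ) ≤ max |a| |b| := le_trans (abs_nonneg a) (le_max_left _ _)
  by_contra hq
  push_neg at hq
  have hq0 : Qnorm a h b w n ≤ 0 := by omega
  nlinarith
end


lemma limsup_le_of_sub_tendsto (u v : ℕ → ℝ) (Cu Cv : ℝ)
    (hu0 : ∀ n, 0 ≤ u n) (huC : ∀ n, u n ≤ Cu)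
    (hv0 : ∀ n, 0 ≤ v n) (hvC : ∀ n, v n ≤ Cv)
    (hs : Filter.Tendsto (fun n => u n - v n) atTop (nhds 0)) :
    limsup u atTop ≤ limsup v atTop := by
  have bddv : IsBoundedUnder (· ≤ ·) atTop v := isBoundedUnder_of ⟨Cv, hvC⟩
  have cobddv : IsCoboundedUnder (· ≤ ·) atTop v :=
    IsBoundedUnder.isCoboundedUnder_le (isBoundedUnder_of ⟨0, hv0⟩)
  have cobddu : IsCoboundedUnder (· ≤ ·) atTop u :=
    IsBoundedUnder.isCoboundedUnder_le (isBoundedUnder_of ⟨0, hu0⟩)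
  refine le_of_forall_pos_le_add fun ε hε => ?_
  have hev : ∀ᶠ n in atTop, u n ≤ v n + ε := by
    filter_upwards [hs.eventually_lt_const hε] with n hn
    linarith
  have bddvε : IsBoundedUnder (· ≤ ·) atTop (fun n => v n + ε) :=
    isBoundedUnder_of ⟨Cv + ε, fun n => add_le_add_left (hvC n) ε⟩
  have h1 : limsup u atTop ≤ limsup (fun n => v n + ε) atTop :=
    limsup_le_limsup hev cobddu bddvε
  rwa [limsup_add_const atTop v ε bddv cobddv] at h1

lemma limsup_eq_of_sub_tendsto (u v : ℕ → ℝ) (Cu Cv : ℝ)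
    (hu0 : ∀ n, 0 ≤ u n) (huC : ∀ n, u n ≤ Cu)
    (hv0 : ∀ n, 0 ≤ v n) (hvC : ∀ n, v n ≤ Cv)
    (hs : Filter.Tendsto (fun n => u n - v n) atTop (nhds 0)) :
    limsup u atTop = limsup v atTop := by
  refine le_antisymm (limsup_le_of_sub_tendsto u v Cu Cv hu0 huC hv0 hvC hs) ?_
  refine limsup_le_of_sub_tendsto v u Cv Cu hv0 hvC hu0 huC ?_
  have : (fun n => v n - u n) = fun n => -((fun m => u m - v m) n) := by
    funext n; ring
  rw [this]
  simpa using hs.neg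

lemma limsup_two_mul (g : ℕ → ℝ) (C : ℝ) (hg0 : ∀ n, 0 ≤ g n) (hgC : ∀ n, g n ≤ C) :
    limsup (fun n => 2 * g n) atTop = 2 * limsup g atTop := by
  have h := (OrderIso.mulLeft₀ (2:ℝ) (by norm_num)).limsup_apply (u := g) (f := atTop)
    (isBoundedUnder_of ⟨C, hgC⟩)
    (IsBoundedUnder.isCoboundedUnder_le (isBoundedUnder_of ⟨0, hg0⟩))
    (isBoundedUnder_of ⟨2*C, fun n => by simpa using by nlinarith [hgC n]⟩)
    (IsBoundedUnder.isCoboundedUnder_le (isBoundedUnder_of ⟨0, fun n => by simpa using by nlinarith [hg0 n]⟩))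
  simpa using h.symm

lemma log_nat_succ_div_tendsto :
    Filter.Tendsto (fun n : ℕ => Real.log (n + 1) / n) atTop (nhds 0) := by
  have h1 : Filter.Tendsto (fun x : ℝ => Real.log x / x) atTop (nhds 0) := by
    have := Real.tendsto_pow_log_div_mul_add_atTop 1 0 1 one_ne_zero
    simpa using this
  have h2 : Filter.Tendsto (fun n : ℕ => ((n:ℝ) + 1)) atTop atTop :=
    tendsto_atTop_add_const_right _ 1 tendsto_natCast_atTop_atTop
  have h3 : Filter.Tendsto (fun n : ℕ => Real.log ((n:ℝ)+1) / ((n:ℝ)+1)) atTop (nhds 0) :=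
    h1.comp h2
  -- log(n+1)/n = (log(n+1)/(n+1)) * ((n+1)/n)
  have h4 : Filter.Tendsto (fun n : ℕ => ((n:ℝ)+1) / n) atTop (nhds 1) := by
    have : (fun n : ℕ => ((n:ℝ)+1)/n) =ᶠ[atTop] fun n : ℕ => 1 + 1/(n:ℝ) := by
      filter_upwards [eventually_gt_atTop 0] with n hn
      field_simp
    rw [Filter.tendsto_congr' this]
    have := (tendsto_const_div_atTop_nhds_zero_nat (1:ℝ)).const_add 1
    simpa using this
  have h5 := h3.mul h4
  rw [mul_one] at h5
  refine h5.congr' ?_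
  filter_upwards [eventually_gt_atTop 0] with n hn
  have hn' : (n:ℝ) ≠ 0 := Nat.cast_ne_zero.mpr hn.ne'
  have hn1 : ((n:ℝ)+1) ≠ 0 := by positivity
  field_simp


section
variable {w : ℕ → Matrix (Fin 2) (Fin 2) ℤ}

lemma rho_eq (hw : ∀ n, w n = Lm ∨ w n = Rm) (n : ℕ) :
    (spectralRadius ℂ ((pathMat w n).map ((↑) : ℤ → ℂ))).toReal
      = (((trA w n : ℤ) : ℝ) + Real.sqrt (((trA w n : ℤ) : ℝ) ^ 2 - 4)) / 2 := by
  apply specrad_fin_two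
  · exact_mod_cast two_le_tr hw n
  · simp only [Matrix.map_apply]
    unfold trA
    push_cast
    ring
  · have hd := (pathFacts w hw n).hdet
    simp only [Matrix.map_apply]
    exact_mod_cast hd

lemma rho_lb (hw : ∀ n, w n = Lm ∨ w n = Rm) (n : ℕ) :
    ((trA w n : ℤ) : ℝ) / 2 ≤ (spectralRadius ℂ ((pathMat w n).map ((↑) : ℤ → ℂ))).toReal := by
  rw [rho_eq hw n]
  have := Real.sqrt_nonneg (((trA w n : ℤ) : ℝ) ^ 2 - 4)
  linarith

lemma rho_ub (hw : ∀ n, w n = Lm ∨ w n = Rm) (n : ℕ) :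
    (spectralRadius ℂ ((pathMat w n).map ((↑) : ℤ → ℂ))).toReal ≤ ((trA w n : ℤ) : ℝ) := by
  rw [rho_eq hw n]
  have ht : (2:ℝ) ≤ ((trA w n : ℤ) : ℝ) := by exact_mod_cast two_le_tr hw n
  have h1 : Real.sqrt (((trA w n : ℤ) : ℝ) ^ 2 - 4) ≤ ((trA w n : ℤ) : ℝ) := by
    have h2 : (((trA w n : ℤ) : ℝ)) ^ 2 - 4 ≤ (((trA w n : ℤ) : ℝ)) ^ 2 := by nlinarith
    calc Real.sqrt (((trA w n : ℤ) : ℝ) ^ 2 - 4)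
        ≤ Real.sqrt ((((trA w n : ℤ) : ℝ)) ^ 2) := Real.sqrt_le_sqrt h2
      _ = ((trA w n : ℤ) : ℝ) := by rw [Real.sqrt_sq (by linarith)]
  linarith

lemma log_le_log_add {x c m : ℝ} (hx : 0 < x) (hc : 0 < c) (hm : 0 < m)
    (hle : x ≤ c * m) : Real.log x ≤ Real.log c + Real.log m := by
  have h1 := Real.log_le_log hx hle
  rwa [Real.log_mul hc.ne' hm.ne'] at h1

lemma log_le_log_add_two {x c m : ℝ} (hx : 0 < x) (hc : 0 < c) (hm : 0 < m)
    (hle : x ≤ c * m ^ 2) : Real.log x ≤ Real.log c + 2 * Real.log m := by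
  have h1 := Real.log_le_log hx (hle.trans_eq (by ring : c * m ^ 2 = c * (m * m)))
  rwa [Real.log_mul hc.ne' (by positivity), Real.log_mul hm.ne' hm.ne', ← two_mul] at h1
  
lemma log_sq_le_log_add {d m c q : ℝ} (hd : 0 < d) (hm : 0 < m) (hc : 0 < c) (hq : 0 < q)
    (hle : d * m ^ 2 ≤ c * q) :
    Real.log d + 2 * Real.log m ≤ Real.log c + Real.log q := by
  have h1 := Real.log_le_log (by positivity) hle
  rw [show d * m ^ 2 = d * (m * m) by ring] at h1
  rwa [Real.log_mul hd.ne' (by positivity), Real.log_mul hm.ne' hm.ne',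
    Real.log_mul hc.ne' hq.ne', ← two_mul] at h1

end


/-- For a definite integer binary quadratic form `Q = a x² + h x y + b y²`
(discriminant `D = h² - 4ab < 0`) and every path `w` in {L,R}^ℕ, one has `Λ_Q(w) = 2 Λ(w)`. -/
theorem lyapunov_definite_form (a h b : ℤ) (hdef : h ^ 2 - 4 * a * b < 0)
    (w : ℕ → Matrix (Fin 2) (Fin 2) ℤ) (hw : ∀ n, w n = Lm ∨ w n = Rm) :
    LyapQ a h b w = 2 * Lyap w := by
  classical
  have ha : a ≠ 0 := by rintro rfl; nlinarith [sq_nonneg h]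
  have ha1 : (1:ℤ) ≤ |a| := Int.one_le_abs ha
  have hK1 : (1:ℤ) ≤ |a| + |h| + |b| := by linarith [abs_nonneg h, abs_nonneg b]
  have hE1 : (1:ℤ) ≤ max |a| |b| := le_trans ha1 (le_max_left _ _)
  have hD1 : (1:ℤ) ≤ 4*a*b - h^2 := by
    have h0 : (0:ℤ) < 4*a*b - h^2 := by linarith
    omega
  have hKR1 : (1:ℝ) ≤ ((|a| + |h| + |b| : ℤ) : ℝ) := by exact_mod_cast hK1
  have hER1 : (1:ℝ) ≤ ((max |a| |b| : ℤ) : ℝ) := by exact_mod_cast hE1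
  have hDR1 : (1:ℝ) ≤ ((4*a*b - h^2 : ℤ) : ℝ) := by exact_mod_cast hD1
  have hlog2 : (0:ℝ) ≤ Real.log 2 := Real.log_nonneg (by norm_num)
  have hlog4K : (0:ℝ) ≤ Real.log (4*((|a| + |h| + |b| : ℤ) : ℝ)) :=
    Real.log_nonneg (by linarith)
  have hlog4E : (0:ℝ) ≤ Real.log (4*((max |a| |b| : ℤ) : ℝ)) :=
    Real.log_nonneg (by linarith)
  have hlogD : (0:ℝ) ≤ Real.log ((4*a*b - h^2 : ℤ) : ℝ) := Real.log_nonneg hDR1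
  have htR2 : ∀ n, (2:ℝ) ≤ ((trA w n : ℤ) : ℝ) := fun n => by exact_mod_cast two_le_tr hw n
  have hMR1 : ∀ n, (1:ℝ) ≤ ((MxA w n : ℤ) : ℝ) := fun n => by exact_mod_cast one_le_mx hw n
  have hQR1 : ∀ n, (1:ℝ) ≤ ((Qnorm a h b w n : ℤ) : ℝ) := fun n => by
    exact_mod_cast one_le_qnorm a h b hdef hw n
  have htM : ∀ n, ((trA w n : ℤ) : ℝ) ≤ 2 * ((MxA w n : ℤ) : ℝ) := fun n => by
    exact_mod_cast tr_le_two_mx n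
  have hMt : ∀ n, ((MxA w n : ℤ) : ℝ) ≤ ((n:ℝ)+1) * ((trA w n : ℤ) : ℝ) := fun n => by
    exact_mod_cast mx_le hw n
  have hM2 : ∀ n, ((MxA w n : ℤ) : ℝ) ≤ 2 ^ n := fun n => by exact_mod_cast mx_pow hw n
  have hQu : ∀ n, ((Qnorm a h b w n : ℤ) : ℝ)
      ≤ (4*((|a| + |h| + |b| : ℤ) : ℝ)) * ((MxA w n : ℤ) : ℝ) ^ 2 := fun n => by
    exact_mod_cast qnorm_upper a h b hw n
  have hQl : ∀ n, ((4*a*b - h^2 : ℤ) : ℝ) * ((MxA w n : ℤ) : ℝ) ^ 2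
      ≤ (4*((max |a| |b| : ℤ) : ℝ)) * ((Qnorm a h b w n : ℤ) : ℝ) := fun n => by
    exact_mod_cast qnorm_lower a h b hw n
  have hMpos : ∀ n, (0:ℝ) < ((MxA w n : ℤ) : ℝ) := fun n => lt_of_lt_of_le one_pos (hMR1 n)
  have htpos : ∀ n, (0:ℝ) < ((trA w n : ℤ) : ℝ) := fun n => lt_of_lt_of_le two_pos (htR2 n)
  have hQpos : ∀ n, (0:ℝ) < ((Qnorm a h b w n : ℤ) : ℝ) :=
    fun n => lt_of_lt_of_le one_pos (hQR1 n)
  have hrho1 : ∀ n, (1:ℝ) ≤ (spectralRadius ℂ ((pathMat w n).map ((↑) : ℤ → ℂ))).toReal :=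
    fun n => le_trans (by linarith [htR2 n]) (rho_lb hw n)
  have hrhopos : ∀ n, (0:ℝ) < (spectralRadius ℂ ((pathMat w n).map ((↑) : ℤ → ℂ))).toReal :=
    fun n => lt_of_lt_of_le one_pos (hrho1 n)
  -- log inequalities
  have lQu : ∀ n, Real.log ((Qnorm a h b w n : ℤ) : ℝ)
      ≤ Real.log (4*((|a| + |h| + |b| : ℤ) : ℝ)) + 2 * Real.log ((MxA w n : ℤ) : ℝ) :=
    fun n => log_le_log_add_two (hQpos n) (by linarith) (hMpos n) (hQu n)
  have lQl : ∀ n, Real.log ((4*a*b - h^2 : ℤ) : ℝ) + 2 * Real.log ((MxA w n : ℤ) : ℝ)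
      ≤ Real.log (4*((max |a| |b| : ℤ) : ℝ)) + Real.log ((Qnorm a h b w n : ℤ) : ℝ) :=
    fun n => log_sq_le_log_add (by linarith) (hMpos n) (by linarith) (hQpos n) (hQl n)
  have ltM : ∀ n, Real.log ((trA w n : ℤ) : ℝ)
      ≤ Real.log 2 + Real.log ((MxA w n : ℤ) : ℝ) :=
    fun n => log_le_log_add (htpos n) two_pos (hMpos n) (htM n)
  have lMt : ∀ n, Real.log ((MxA w n : ℤ) : ℝ)
      ≤ Real.log ((n:ℝ)+1) + Real.log ((trA w n : ℤ) : ℝ) :=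
    fun n => log_le_log_add (hMpos n) (by positivity) (htpos n) (hMt n)
  have lM2 : ∀ n : ℕ, Real.log ((MxA w n : ℤ) : ℝ) ≤ (n:ℝ) * Real.log 2 := by
    intro n
    have h1 := Real.log_le_log (hMpos n) (hM2 n)
    rwa [Real.log_pow] at h1
  have lr_ub : ∀ n, Real.log ((spectralRadius ℂ ((pathMat w n).map ((↑) : ℤ → ℂ))).toReal)
      ≤ Real.log ((trA w n : ℤ) : ℝ) :=
    fun n => Real.log_le_log (hrhopos n) (rho_ub hw n)
  have lr_lb : ∀ n, Real.log ((trA w n : ℤ) : ℝ) - Real.log 2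
      ≤ Real.log ((spectralRadius ℂ ((pathMat w n).map ((↑) : ℤ → ℂ))).toReal) := by
    intro n
    have h1 := Real.log_le_log (by linarith [htR2 n] : (0:ℝ) < ((trA w n : ℤ) : ℝ)/2)
      (rho_lb hw n)
    rwa [Real.log_div (by linarith [htR2 n]) two_ne_zero] at h1
  have lr0 : ∀ n, 0 ≤ Real.log ((spectralRadius ℂ ((pathMat w n).map ((↑) : ℤ → ℂ))).toReal) :=
    fun n => Real.log_nonneg (hrho1 n)
  have hLq0 : ∀ n, 0 ≤ Real.log ((Qnorm a h b w n : ℤ) : ℝ) :=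
    fun n => Real.log_nonneg (hQR1 n)
  -- the sequences
  have hu0 : ∀ n : ℕ, 0 ≤ Real.log ((Qnorm a h b w n : ℤ) : ℝ) / (n:ℝ) :=
    fun n => div_nonneg (hLq0 n) (Nat.cast_nonneg n)
  have huC : ∀ n : ℕ, Real.log ((Qnorm a h b w n : ℤ) : ℝ) / (n:ℝ)
      ≤ Real.log (4*((|a| + |h| + |b| : ℤ) : ℝ)) + 2 * Real.log 2 := by
    intro n
    rcases Nat.eq_zero_or_pos n with hn | hn
    · subst hn; rw [Nat.cast_zero, div_zero]; linarith
    · have hn0 : (0:ℝ) < n := by exact_mod_cast hn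
      have hn1 : (1:ℝ) ≤ n := by exact_mod_cast hn
      rw [div_le_iff₀ hn0]
      nlinarith [lQu n, lM2 n, hlog4K, hlog2]
  have hg0 : ∀ n : ℕ,
      0 ≤ Real.log ((spectralRadius ℂ ((pathMat w n).map ((↑) : ℤ → ℂ))).toReal) / (n:ℝ) :=
    fun n => div_nonneg (lr0 n) (Nat.cast_nonneg n)
  have hgC : ∀ n : ℕ,
      Real.log ((spectralRadius ℂ ((pathMat w n).map ((↑) : ℤ → ℂ))).toReal) / (n:ℝ)
        ≤ 2 * Real.log 2 := by
    intro n
    rcases Nat.eq_zero_or_pos n with hn | hn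
    · subst hn; rw [Nat.cast_zero, div_zero]; linarith
    · have hn0 : (0:ℝ) < n := by exact_mod_cast hn
      have hn1 : (1:ℝ) ≤ n := by exact_mod_cast hn
      rw [div_le_iff₀ hn0]
      nlinarith [lr_ub n, ltM n, lM2 n, hlog2]
  have hv0 : ∀ n : ℕ, 0 ≤ 2 *
      (Real.log ((spectralRadius ℂ ((pathMat w n).map ((↑) : ℤ → ℂ))).toReal) / (n:ℝ)) :=
    fun n => by linarith [hg0 n]
  have hvC : ∀ n : ℕ, 2 *
      (Real.log ((spectralRadius ℂ ((pathMat w n).map ((↑) : ℤ → ℂ))).toReal) / (n:ℝ))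
        ≤ 4 * Real.log 2 := fun n => by linarith [hgC n]
  -- the difference tends to zero
  have hs : Filter.Tendsto (fun n : ℕ =>
      Real.log ((Qnorm a h b w n : ℤ) : ℝ) / (n:ℝ)
        - 2 * (Real.log ((spectralRadius ℂ ((pathMat w n).map ((↑) : ℤ → ℂ))).toReal) / (n:ℝ)))
      atTop (nhds 0) := by
    apply squeeze_zero_norm' (a := fun n : ℕ =>
      ((Real.log (4*((|a| + |h| + |b| : ℤ) : ℝ)) + Real.log (4*((max |a| |b| : ℤ) : ℝ))
        + 2 * Real.log 2) + 2 * Real.log ((n:ℝ)+1)) / (n:ℝ))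
    · filter_upwards [eventually_ge_atTop 1] with n hn
      have hn0 : (0:ℝ) < n := by exact_mod_cast hn
      have hlogn1 : 0 ≤ Real.log ((n:ℝ)+1) := Real.log_nonneg (le_add_of_nonneg_left (Nat.cast_nonneg n))
      have habs : |Real.log ((Qnorm a h b w n : ℤ) : ℝ)
          - 2 * Real.log ((spectralRadius ℂ ((pathMat w n).map ((↑) : ℤ → ℂ))).toReal)|
          ≤ (Real.log (4*((|a| + |h| + |b| : ℤ) : ℝ)) + Real.log (4*((max |a| |b| : ℤ) : ℝ))
            + 2 * Real.log 2) + 2 * Real.log ((n:ℝ)+1) := by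
        rw [abs_le]
        constructor
        · linarith [lQl n, ltM n, lr_ub n, hlogD, hlogn1, hlog4K]
        · linarith [lQu n, lMt n, lr_lb n, hlog4E, hlogn1]
      have heq : Real.log ((Qnorm a h b w n : ℤ) : ℝ) / (n:ℝ)
          - 2 * (Real.log ((spectralRadius ℂ ((pathMat w n).map ((↑) : ℤ → ℂ))).toReal) / (n:ℝ))
          = (Real.log ((Qnorm a h b w n : ℤ) : ℝ)
            - 2 * Real.log ((spectralRadius ℂ ((pathMat w n).map ((↑) : ℤ → ℂ))).toReal)) / (n:ℝ) := by
        ring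
      rw [heq, Real.norm_eq_abs, abs_div, abs_of_pos hn0]
      exact (div_le_div_iff_of_pos_right hn0).mpr habs
    · have t1 := tendsto_const_div_atTop_nhds_zero_nat
        (Real.log (4*((|a| + |h| + |b| : ℤ) : ℝ)) + Real.log (4*((max |a| |b| : ℤ) : ℝ))
          + 2 * Real.log 2)
      have t2 := log_nat_succ_div_tendsto.const_mul (2:ℝ)
      have t3 := t1.add t2
      simp only [mul_zero, add_zero] at t3
      refine t3.congr fun n => ?_
      rw [eq_comm, add_div, mul_div_assoc]
  -- conclude
  calc LyapQ a h b w
      = limsup (fun n : ℕ => Real.log ((Qnorm a h b w n : ℤ) : ℝ) / (n:ℝ)) atTop := rfl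
    _ = limsup (fun n : ℕ => 2 *
          (Real.log ((spectralRadius ℂ ((pathMat w n).map ((↑) : ℤ → ℂ))).toReal) / (n:ℝ)))
          atTop :=
        limsup_eq_of_sub_tendsto _ _
          (Real.log (4*((|a| + |h| + |b| : ℤ) : ℝ)) + 2 * Real.log 2) (4 * Real.log 2)
          hu0 huC hv0 hvC hs
    _ = 2 * limsup (fun n : ℕ =>
          Real.log ((spectralRadius ℂ ((pathMat w n).map ((↑) : ℤ → ℂ))).toReal) / (n:ℝ))
          atTop :=
        limsup_two_mul _ (2 * Real.log 2) hg0 hgC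
    _ = 2 * Lyap w := rfl

end
end

section
/- Let Q(x,y)=ax²+hxy+by² be an indefinite integer binary quadratic form whose discriminant D=h²−4ab is positive and not a perfect square, let α ∈ (0,∞) be an irrational root of Q(α,1)=0, and let w_α be its associated word. Then the path w_α eventually runs along the Conway river of Q: there exists N such that for all n ≥ N, Q(pₙ,rₙ)·Q(qₙ,sₙ) < 0, i.e. the two regions adjacent to the n-th edge of the path carry values of Q of opposite signs. -/
open Filter Matrix

noncomputable section

/-- The Gauss map iterates of `α`. -/
def cfXi (α : ℝ) : ℕ → ℝ
  | 0 => α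
  | n + 1 => 1 / Int.fract (cfXi α n)

/-- The `n`-th partial quotient of `α`. -/
def cfA (α : ℝ) (n : ℕ) : ℤ := ⌊cfXi α n⌋

/-- The word consisting of `c 0` copies of `L`, then `c 1` copies of `R`, then `c 2`
copies of `L`, and so on. -/
def wordOf (c : ℕ → ℕ) (n : ℕ) : Matrix (Fin 2) (Fin 2) ℤ :=
  if Nat.findGreatest (fun k => ∑ i ∈ Finset.range k, c i ≤ n) (n + 1) % 2 = 0 then Lm else Rm

/-- The word `w_α` associated to the continued fraction expansion of `α`. -/
def wordOfCF (α : ℝ) : ℕ → Matrix (Fin 2) (Fin 2) ℤ :=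
  wordOf (fun n => (cfA α n).toNat)


namespace CRAux

def cc (α : ℝ) (n : ℕ) : ℕ := (cfA α n).toNat
def SS (α : ℝ) (m : ℕ) : ℕ := ∑ i ∈ Finset.range m, cc α i
def blk (α : ℝ) (n : ℕ) : ℕ := Nat.findGreatest (fun k => SS α k ≤ n) (n + 1)

lemma letter_eq (α : ℝ) (n : ℕ) :
    wordOfCF α n = if blk α n % 2 = 0 then Lm else Rm := rfl

lemma pathMat_succ (w : ℕ → Matrix (Fin 2) (Fin 2) ℤ) (n : ℕ) :
    pathMat w (n+1) = pathMat w n * w n := by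
  simp [pathMat, List.range_succ]

lemma mulL (A : Matrix (Fin 2) (Fin 2) ℤ) :
    A * Lm = !![A 0 0, A 0 0 + A 0 1; A 1 0, A 1 0 + A 1 1] := by
  ext i j; fin_cases i <;> fin_cases j <;>
    simp [Lm, Matrix.mul_apply, Fin.sum_univ_two]

lemma mulR (A : Matrix (Fin 2) (Fin 2) ℤ) :
    A * Rm = !![A 0 0 + A 0 1, A 0 1; A 1 0 + A 1 1, A 1 1] := by
  ext i j; fin_cases i <;> fin_cases j <;>
    simp [Rm, Matrix.mul_apply, Fin.sum_univ_two]

variable {α : ℝ}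

lemma xi_irr (hirr : Irrational α) : ∀ n, Irrational (cfXi α n)
  | 0 => hirr
  | (n+1) => by
      have h1 : Irrational (Int.fract (cfXi α n)) := by
        unfold Int.fract; exact (xi_irr hirr n).sub_intCast _
      simpa [cfXi, one_div] using h1.inv

lemma fract_xi_pos (hirr : Irrational α) (n : ℕ) : 0 < Int.fract (cfXi α n) := by
  rw [Int.fract_pos]; exact (xi_irr hirr n).ne_int _

lemma xi_gt_one (hirr : Irrational α) (n : ℕ) : 1 < cfXi α (n+1) := by
  rw [cfXi]
  exact (one_lt_div (fract_xi_pos hirr n)).mpr (Int.fract_lt_one _)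

lemma xi_pos (hpos : 0 < α) (hirr : Irrational α) : ∀ n, 0 < cfXi α n
  | 0 => hpos
  | (n+1) => lt_trans one_pos (xi_gt_one hirr n)

lemma cc_cast (hpos : 0 < α) (hirr : Irrational α) (n : ℕ) : (cc α n : ℤ) = cfA α n :=
  Int.toNat_of_nonneg (Int.floor_nonneg.mpr (xi_pos hpos hirr n).le)

lemma cc_pos (hirr : Irrational α) (n : ℕ) : 1 ≤ cc α (n+1) := by
  have : (1 : ℤ) ≤ cfA α (n+1) := Int.le_floor.mpr (by exact_mod_cast (xi_gt_one hirr n).le)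
  unfold cc; omega

lemma cc_le_xi (hpos : 0 < α) (hirr : Irrational α) (n : ℕ) : (cc α n : ℝ) ≤ cfXi α n := by
  have h1 := Int.floor_le (cfXi α n)
  have h2 : ((cc α n : ℤ) : ℝ) = ((cfA α n : ℤ) : ℝ) := by rw [cc_cast hpos hirr]
  push_cast at h2
  rw [h2]; exact h1

lemma fract_xi_eq (hpos : 0 < α) (hirr : Irrational α) (n : ℕ) :
    Int.fract (cfXi α n) = cfXi α n - cc α n := by
  have h2 : ((cc α n : ℤ) : ℝ) = ((cfA α n : ℤ) : ℝ) := by rw [cc_cast hpos hirr]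
  push_cast at h2
  rw [Int.fract, h2]; rfl

lemma SS_succ (m : ℕ) : SS α (m+1) = SS α m + cc α m := Finset.sum_range_succ _ _

lemma SS_mono : Monotone (SS α) := fun i j hij =>
  Finset.sum_le_sum_of_subset (Finset.range_subset_range.mpr hij)

lemma le_SS_succ (hirr : Irrational α) : ∀ m, m ≤ SS α (m+1)
  | 0 => Nat.zero_le _
  | (m+1) => by
      have h1 := le_SS_succ hirr m
      have h2 := cc_pos hirr m
      rw [SS_succ]; omega

lemma SS_blk_le (n : ℕ) : SS α (blk α n) ≤ n :=
  Nat.findGreatest_spec (P := fun k => SS α k ≤ n) (Nat.zero_le _) (by simp [SS])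

lemma lt_SS_blk_succ (hirr : Irrational α) (n : ℕ) : n < SS α (blk α n + 1) := by
  by_cases hb : blk α n + 1 ≤ n + 1
  · have := Nat.findGreatest_is_greatest (P := fun k => SS α k ≤ n)
      (lt_add_one (blk α n)) hb
    omega
  · have hle : blk α n ≤ n + 1 := Nat.findGreatest_le _
    have hbe : blk α n = n + 1 := by omega
    have h1 : SS α (n+1) ≤ n := by
      have := SS_blk_le (α := α) n; rwa [hbe] at this
    have h2 : n ≤ SS α (n+1) := le_SS_succ hirr n
    have h3 := SS_succ (α := α) (n+1)
    have h4 := cc_pos hirr n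
    rw [hbe]; omega

lemma blk_eq (hirr : Irrational α) {m n : ℕ} (h1 : SS α m ≤ n) (h2 : n < SS α (m+1)) :
    blk α n = m := by
  have hub : m ≤ n + 1 := by
    cases m with
    | zero => omega
    | succ k =>
        have := le_SS_succ hirr k
        have h3 : SS α (k+1) ≤ n := h1
        omega
  have hge : m ≤ blk α n := Nat.le_findGreatest hub h1
  have hle : blk α n ≤ m := by
    by_contra hcon
    have ha : SS α (m+1) ≤ SS α (blk α n) := SS_mono (by omega)
    have hb := SS_blk_le (α := α) n
    omega
  omega

lemma blk_succ_cases (hirr : Irrational α) (n : ℕ) :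
    (n+1 < SS α (blk α n + 1) ∧ blk α (n+1) = blk α n) ∨
    (n+1 = SS α (blk α n + 1) ∧ blk α (n+1) = blk α n + 1) := by
  have h1 := SS_blk_le (α := α) n
  have h2 := lt_SS_blk_succ hirr n
  rcases lt_or_eq_of_le (Nat.succ_le_of_lt h2) with hlt | heq
  · exact Or.inl ⟨hlt, blk_eq hirr (by omega) hlt⟩
  · refine Or.inr ⟨heq, blk_eq hirr heq.symm.le ?_⟩
    have h3 := SS_succ (α := α) (blk α n + 1)
    have h4 := cc_pos hirr (blk α n)
    omega

end CRAux

namespace CRAux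

variable {α : ℝ}

def dd (α : ℝ) (n : ℕ) : ℝ := cfXi α (blk α n) - ((n - SS α (blk α n) : ℕ) : ℝ)

def sig (α : ℝ) (n : ℕ) : ℝ := if blk α n % 2 = 0 then dd α n else (dd α n)⁻¹

lemma dd_gt_one (hpos : 0 < α) (hirr : Irrational α) (n : ℕ) : 1 < dd α n := by
  have h1 : SS α (blk α n) ≤ n := SS_blk_le n
  have h2 : n < SS α (blk α n + 1) := lt_SS_blk_succ hirr n
  have h3 : SS α (blk α n + 1) = SS α (blk α n) + cc α (blk α n) := SS_succ _
  have hj : n - SS α (blk α n) + 1 ≤ cc α (blk α n) := by omega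
  have hcast : ((n - SS α (blk α n) : ℕ) : ℝ) + 1 ≤ (cc α (blk α n) : ℝ) := by
    exact_mod_cast hj
  have h4 := fract_xi_pos hirr (blk α n)
  have h5 := fract_xi_eq hpos hirr (blk α n)
  unfold dd; linarith

lemma sig_pos (hpos : 0 < α) (hirr : Irrational α) (n : ℕ) : 0 < sig α n := by
  unfold sig
  split
  · linarith [dd_gt_one hpos hirr n]
  · exact inv_pos.mpr (by linarith [dd_gt_one hpos hirr n])

lemma dd_stay {n : ℕ} (hblk : blk α (n+1) = blk α n) (hS : SS α (blk α n) ≤ n) :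
    dd α (n+1) = dd α n - 1 := by
  unfold dd
  rw [hblk]
  have : n + 1 - SS α (blk α n) = (n - SS α (blk α n)) + 1 := by omega
  rw [this]
  push_cast
  ring

lemma dd_move (hpos : 0 < α) (hirr : Irrational α) {n : ℕ}
    (hmv : n + 1 = SS α (blk α n + 1)) (hblk : blk α (n+1) = blk α n + 1) :
    dd α (n+1) = (dd α n - 1)⁻¹ := by
  have hS : SS α (blk α n) ≤ n := SS_blk_le n
  have h3 : SS α (blk α n + 1) = SS α (blk α n) + cc α (blk α n) := SS_succ _
  have hj : n - SS α (blk α n) + 1 = cc α (blk α n) := by omega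
  have hxi : cfXi α (blk α n + 1) = (Int.fract (cfXi α (blk α n)))⁻¹ := by
    rw [show blk α n + 1 = (blk α n) + 1 from rfl, cfXi, one_div]
  have h5 := fract_xi_eq hpos hirr (blk α n)
  have hcast : ((n - SS α (blk α n) : ℕ) : ℝ) + 1 = (cc α (blk α n) : ℝ) := by
    exact_mod_cast hj
  have hj' : n + 1 - SS α (blk α n + 1) = 0 := by omega
  unfold dd
  rw [hblk, hj', hxi]
  simp only [Nat.cast_zero, sub_zero]
  congr 1
  rw [h5]
  have : cfXi α (blk α n) - ((n - SS α (blk α n) : ℕ) : ℝ) - 1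
      = cfXi α (blk α n) - (cc α (blk α n) : ℝ) := by linarith
  linarith [this]

lemma sig_succ_L (hpos : 0 < α) (hirr : Irrational α) {n : ℕ}
    (hpar : blk α n % 2 = 0) : sig α (n+1) = sig α n - 1 := by
  rcases blk_succ_cases hirr n with ⟨hlt, hblk⟩ | ⟨hmv, hblk⟩
  · have hpar' : blk α (n+1) % 2 = 0 := by rw [hblk]; exact hpar
    unfold sig
    rw [if_pos hpar', if_pos hpar, dd_stay hblk (SS_blk_le n)]
  · have hpar' : ¬ (blk α (n+1) % 2 = 0) := by rw [hblk]; omega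
    unfold sig
    rw [if_neg hpar', if_pos hpar, dd_move hpos hirr hmv hblk, inv_inv]

lemma sig_succ_R (hpos : 0 < α) (hirr : Irrational α) {n : ℕ}
    (hpar : ¬ (blk α n % 2 = 0)) : sig α (n+1) = (dd α n - 1)⁻¹ := by
  rcases blk_succ_cases hirr n with ⟨hlt, hblk⟩ | ⟨hmv, hblk⟩
  · have hpar' : ¬ (blk α (n+1) % 2 = 0) := by rw [hblk]; exact hpar
    unfold sig
    rw [if_neg hpar', dd_stay hblk (SS_blk_le n)]
  · have hpar' : blk α (n+1) % 2 = 0 := by rw [hblk]; omega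
    unfold sig
    rw [if_pos hpar', dd_move hpos hirr hmv hblk]

/-- The entries of the path matrix. -/
def pE (α : ℝ) (n : ℕ) : ℤ := pathMat (wordOfCF α) n 0 0
def qE (α : ℝ) (n : ℕ) : ℤ := pathMat (wordOfCF α) n 0 1
def rE (α : ℝ) (n : ℕ) : ℤ := pathMat (wordOfCF α) n 1 0
def sE (α : ℝ) (n : ℕ) : ℤ := pathMat (wordOfCF α) n 1 1

lemma entries_zero : pE α 0 = 1 ∧ qE α 0 = 0 ∧ rE α 0 = 0 ∧ sE α 0 = 1 := by
  refine ⟨?_, ?_, ?_, ?_⟩ <;> simp [pE, qE, rE, sE, pathMat, Matrix.one_apply]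

lemma step_L {n : ℕ} (hpar : blk α n % 2 = 0) :
    pE α (n+1) = pE α n ∧ qE α (n+1) = pE α n + qE α n ∧
    rE α (n+1) = rE α n ∧ sE α (n+1) = rE α n + sE α n := by
  have hm : pathMat (wordOfCF α) (n+1)
      = !![pE α n, pE α n + qE α n; rE α n, rE α n + sE α n] := by
    rw [pathMat_succ, letter_eq, if_pos hpar, mulL]; rfl
  refine ⟨?_, ?_, ?_, ?_⟩ <;> simp only [pE, qE, rE, sE] <;> rw [hm] <;> simp [pE, qE, rE, sE]

lemma step_R {n : ℕ} (hpar : ¬ (blk α n % 2 = 0)) :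
    pE α (n+1) = pE α n + qE α n ∧ qE α (n+1) = qE α n ∧
    rE α (n+1) = rE α n + sE α n ∧ sE α (n+1) = sE α n := by
  have hm : pathMat (wordOfCF α) (n+1)
      = !![pE α n + qE α n, qE α n; rE α n + sE α n, sE α n] := by
    rw [pathMat_succ, letter_eq, if_neg hpar, mulR]; rfl
  refine ⟨?_, ?_, ?_, ?_⟩ <;> simp only [pE, qE, rE, sE] <;> rw [hm] <;> simp [pE, qE, rE, sE]

lemma det_path : ∀ n, pE α n * sE α n - qE α n * rE α n = 1 := by
  intro n
  induction n with
  | zero =>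
      obtain ⟨h1, h2, h3, h4⟩ := entries_zero (α := α)
      rw [h1, h2, h3, h4]; ring
  | succ n ih =>
      by_cases hpar : blk α n % 2 = 0
      · obtain ⟨h1, h2, h3, h4⟩ := step_L hpar
        rw [h1, h2, h3, h4]; linear_combination ih
      · obtain ⟨h1, h2, h3, h4⟩ := step_R hpar
        rw [h1, h2, h3, h4]; linear_combination ih

lemma rs_nonneg : ∀ n, 0 ≤ rE α n ∧ 1 ≤ sE α n := by
  intro n
  induction n with
  | zero =>
      obtain ⟨h1, h2, h3, h4⟩ := entries_zero (α := α)
      rw [h3, h4]; omega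
  | succ n ih =>
      by_cases hpar : blk α n % 2 = 0
      · obtain ⟨h1, h2, h3, h4⟩ := step_L hpar
        rw [h3, h4]; omega
      · obtain ⟨h1, h2, h3, h4⟩ := step_R hpar
        rw [h3, h4]; omega

def fE (α : ℝ) (n : ℕ) : ℝ := (pE α n : ℝ) - α * (rE α n : ℝ)
def gE (α : ℝ) (n : ℕ) : ℝ := (qE α n : ℝ) - α * (sE α n : ℝ)

lemma sig_zero (hpos : 0 < α) (hirr : Irrational α) : sig α 0 = α := by
  have hSS0 : SS α 0 = 0 := rfl
  have hSS1 : SS α 1 = cc α 0 := by rw [SS_succ]; simp [hSS0]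
  by_cases hc : cc α 0 = 0
  · have h0 : (cc α 0 : ℤ) = cfA α 0 := cc_cast hpos hirr 0
    have hfl : ⌊α⌋ = 0 := by
      have h1 : cfA α 0 = 0 := by omega
      simpa [cfA, cfXi] using h1
    have hlt : α < 1 := by
      have := Int.lt_floor_add_one α
      rw [hfl] at this; simpa using this
    have hblk : blk α 0 = 1 := by
      apply blk_eq hirr (show SS α 1 ≤ 0 by omega)
      have h2 := SS_succ (α := α) 1
      have h4 : 1 ≤ cc α 1 := cc_pos hirr 0
      omega
    unfold sig dd
    rw [hblk, if_neg (by norm_num)]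
    have hj : (0 - SS α 1 : ℕ) = 0 := by omega
    rw [hj]
    have hfr : Int.fract α = α := Int.fract_eq_self.mpr ⟨hpos.le, hlt⟩
    rw [show cfXi α 1 = (Int.fract α)⁻¹ from by
      rw [show cfXi α 1 = 1 / Int.fract (cfXi α 0) from rfl, one_div]; rfl, hfr]
    simp
  · have hblk : blk α 0 = 0 := by
      apply blk_eq hirr (by omega)
      rw [hSS1]; omega
    unfold sig dd
    rw [hblk, if_pos (by norm_num)]
    simp [hSS0, cfXi]

end CRAux

namespace CRAux

variable {α : ℝ}

lemma master (hpos : 0 < α) (hirr : Irrational α) :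
    ∀ n, 0 < fE α n ∧ gE α n = -(sig α n) * fE α n := by
  intro n
  induction n with
  | zero =>
      obtain ⟨h1, h2, h3, h4⟩ := entries_zero (α := α)
      constructor
      · unfold fE; rw [h1, h3]; norm_num
      · unfold gE fE; rw [h1, h2, h3, h4, sig_zero hpos hirr]; push_cast; ring
  | succ n ih =>
      obtain ⟨hf, hg⟩ := ih
      by_cases hpar : blk α n % 2 = 0
      · obtain ⟨h1, h2, h3, h4⟩ := step_L hpar
        have hs := sig_succ_L hpos hirr hpar
        have hfE : fE α (n+1) = fE α n := by unfold fE; rw [h1, h3]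
        have hgE : gE α (n+1) = fE α n + gE α n := by
          unfold gE fE; rw [h2, h4]; push_cast; ring
        refine ⟨by rw [hfE]; exact hf, ?_⟩
        rw [hgE, hfE, hs, hg]; ring
      · obtain ⟨h1, h2, h3, h4⟩ := step_R hpar
        have hs := sig_succ_R hpos hirr hpar
        have hsig : sig α n = (dd α n)⁻¹ := by unfold sig; rw [if_neg hpar]
        have hdd := dd_gt_one hpos hirr n
        have hdd0 : (0:ℝ) < dd α n := by linarith
        have hinv : (dd α n)⁻¹ < 1 := by
          have hmul : (dd α n)⁻¹ * dd α n = 1 := inv_mul_cancel₀ (ne_of_gt hdd0)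
          nlinarith [inv_pos.mpr hdd0]
        have hfE : fE α (n+1) = fE α n + gE α n := by
          unfold fE gE; rw [h1, h3]; push_cast; ring
        have hgE : gE α (n+1) = gE α n := by unfold gE; rw [h2, h4]
        have hfpos : 0 < fE α (n+1) := by
          rw [hfE, hg, hsig]
          nlinarith
        refine ⟨hfpos, ?_⟩
        rw [hgE, hs, hfE, hg, hsig]
        have hdd1 : dd α n - 1 ≠ 0 := by intro hcon; rw [sub_eq_zero] at hcon; linarith
        field_simp
        ring

lemma blk_c0 (hirr : Irrational α) : blk α (cc α 0) = 1 := by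
  have hSS1 : SS α 1 = cc α 0 := by rw [SS_succ]; simp [SS]
  apply blk_eq hirr (le_of_eq hSS1)
  have h2 := SS_succ (α := α) 1
  have h4 : 1 ≤ cc α 1 := cc_pos hirr 0
  omega

lemma r_ge_one (hirr : Irrational α) : ∀ n, cc α 0 + 1 ≤ n → 1 ≤ rE α n := by
  intro n
  induction n with
  | zero => omega
  | succ n ih =>
      intro hn
      by_cases hcase : cc α 0 + 1 ≤ n
      · have h1 := ih hcase
        have h2 := (rs_nonneg (α := α) n).2
        by_cases hpar : blk α n % 2 = 0
        · obtain ⟨_, _, h3, _⟩ := step_L hpar; omega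
        · obtain ⟨_, _, h3, _⟩ := step_R hpar; omega
      · have hn0 : n = cc α 0 := by omega
        have hpar : ¬ (blk α n % 2 = 0) := by rw [hn0, blk_c0 hirr]; omega
        obtain ⟨_, _, h3, _⟩ := step_R hpar
        have h4 := (rs_nonneg (α := α) n).1
        have h5 := (rs_nonneg (α := α) n).2
        omega

lemma sum_ge (hirr : Irrational α) :
    ∀ n, cc α 0 + 1 ≤ n → (n : ℤ) - (cc α 0 : ℤ) ≤ rE α n + sE α n := by
  intro n
  induction n with
  | zero => omega
  | succ n ih =>
      intro hn
      by_cases hcase : cc α 0 + 1 ≤ n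
      · have h1 := ih hcase
        have h2 := r_ge_one hirr n hcase
        have h3 := (rs_nonneg (α := α) n).2
        by_cases hpar : blk α n % 2 = 0
        · obtain ⟨_, _, h4, h5⟩ := step_L hpar; push_cast; push_cast at h1; omega
        · obtain ⟨_, _, h4, h5⟩ := step_R hpar; push_cast; push_cast at h1; omega
      · have hn0 : n + 1 = cc α 0 + 1 := by omega
        have h2 := r_ge_one hirr (n+1) hn
        have h3 := (rs_nonneg (α := α) (n+1)).2
        push_cast
        omega

end CRAux


lemma CRAux.endgame (α β f g P Q Rr Ss : ℝ)
    (hf : 0 < f) (hg : g < 0)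
    (hfP : f = P - α*Rr) (hgQ : g = Q - α*Ss)
    (hdet : f*Ss - g*Rr = 1)
    (hr1 : 1 ≤ Rr) (hs1 : 1 ≤ Ss)
    (hkey : 1 < |α - β| * (Rr*Ss)) :
    0 < (P - β*Rr) * (Q - β*Ss) := by
  have hX : P - β*Rr = f + (α - β) * Rr := by rw [hfP]; ring
  have hY : Q - β*Ss = g + (α - β) * Ss := by rw [hgQ]; ring
  rcases lt_trichotomy α β with hab | hab | hab
  · have habs' : |α - β| = β - α := by rw [abs_of_neg (by linarith)]; ring
    rw [habs'] at hkey
    have hfs : f * Ss ≤ 1 := by nlinarith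
    have hXneg : P - β*Rr < 0 := by rw [hX]; nlinarith
    have hYneg : Q - β*Ss < 0 := by rw [hY]; nlinarith
    nlinarith
  · exfalso; rw [hab] at hkey; simp at hkey; nlinarith
  · have habs' : |α - β| = α - β := abs_of_pos (by linarith)
    rw [habs'] at hkey
    have hgr : (-g) * Rr ≤ 1 := by nlinarith
    have hXpos : 0 < P - β*Rr := by rw [hX]; nlinarith
    have hYpos : 0 < Q - β*Ss := by rw [hY]; nlinarith
    nlinarith


/-- For an indefinite integer binary quadratic form `Q` whose discriminant is
positive and not a perfect square, and an irrational root `α ∈ (0,∞)` of `Q(α,1)=0`, the path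
`w_α` eventually runs along the Conway river of `Q`: eventually the two regions adjacent to
the n-th edge carry values of `Q` of opposite signs. -/
theorem path_reaches_conway_river (a h b : ℤ)
    (hD : 0 < h ^ 2 - 4 * a * b) (hns : ¬ IsSquare (h ^ 2 - 4 * a * b))
    (α : ℝ) (hpos : 0 < α) (hirr : Irrational α)
    (hroot : (a : ℝ) * α ^ 2 + (h : ℝ) * α + (b : ℝ) = 0) :
    ∃ N : ℕ, ∀ n ≥ N,
      Qval a h b (pathMat (wordOfCF α) n 0 0) (pathMat (wordOfCF α) n 1 0) *
        Qval a h b (pathMat (wordOfCF α) n 0 1) (pathMat (wordOfCF α) n 1 1) < 0 := by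
  open CRAux in
  have ha : (a : ℝ) ≠ 0 := by
    intro h0
    have haz : a = 0 := by exact_mod_cast h0
    subst haz
    push_cast at hroot
    by_cases hh : h = 0
    · subst hh
      have hb : (b : ℝ) = 0 := by push_cast at hroot; linarith
      have : b = 0 := by exact_mod_cast hb
      subst this
      norm_num at hD
    · have hh' : (h : ℝ) ≠ 0 := by exact_mod_cast hh
      have hαeq : α = ((-(b:ℚ)/(h:ℚ) : ℚ) : ℝ) := by
        push_cast
        field_simp
        linarith
      exact (Rat.not_irrational _) (hαeq ▸ hirr)
  set β : ℝ := -(h:ℝ)/(a:ℝ) - α with hβdef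
  have hβ1 : (a:ℝ) * (α + β) = -(h:ℝ) := by
    rw [hβdef]; field_simp; ring
  have hβ2 : (a:ℝ) * (α * β) = (b:ℝ) := by
    rw [hβdef]; field_simp; nlinarith [hroot]
  have hne : α ≠ β := by
    intro he
    have h2α : (a:ℝ) * (α + α) = -(h:ℝ) := by rw [← he] at hβ1; exact hβ1
    have hq : α = ((-(h:ℚ)/(2*(a:ℚ)) : ℚ) : ℝ) := by
      push_cast
      have ha2 : (2:ℝ) * (a:ℝ) ≠ 0 := by simpa using ha
      field_simp
      linarith
    exact (Rat.not_irrational _) (hq ▸ hirr)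
  have hQcast : ∀ x y : ℤ, ((Qval a h b x y : ℤ) : ℝ)
      = (a:ℝ) * (((x:ℝ) - α*(y:ℝ)) * ((x:ℝ) - β*(y:ℝ))) := by
    intro x y
    unfold Qval
    push_cast
    linear_combination ((x:ℝ)*(y:ℝ)) * hβ1 - ((y:ℝ))^2 * hβ2
  have habs : 0 < |α - β| := abs_pos.mpr (sub_ne_zero.mpr hne)
  obtain ⟨k₀, hk₀⟩ := exists_nat_gt (2 / |α - β|)
  refine ⟨cc α 0 + 1 + k₀, fun n hn => ?_⟩
  have hnc : cc α 0 + 1 ≤ n := by omega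
  obtain ⟨hf, hgeq⟩ := master hpos hirr n
  have hsigp := sig_pos hpos hirr n
  have hgneg : gE α n < 0 := by rw [hgeq]; nlinarith
  have hr1 : 1 ≤ rE α n := r_ge_one hirr n hnc
  have hs1 : 1 ≤ sE α n := (rs_nonneg (α := α) n).2
  have hsum : (n : ℤ) - (cc α 0 : ℤ) ≤ rE α n + sE α n := sum_ge hirr n hnc
  have hdet := det_path (α := α) n
  -- real versions
  have hr1R : (1:ℝ) ≤ (rE α n : ℝ) := by exact_mod_cast hr1
  have hs1R : (1:ℝ) ≤ (sE α n : ℝ) := by exact_mod_cast hs1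
  have hsumR : (k₀ : ℝ) + 1 ≤ (rE α n : ℝ) + (sE α n : ℝ) := by
    have : (k₀ : ℤ) + 1 ≤ rE α n + sE α n := by
      have hnk : (cc α 0 : ℤ) + 1 + k₀ ≤ (n : ℤ) := by exact_mod_cast hn
      omega
    exact_mod_cast this
  have hdetR : fE α n * (sE α n : ℝ) - gE α n * (rE α n : ℝ) = 1 := by
    have hc : ((pE α n : ℤ) : ℝ) * (sE α n : ℝ) - (qE α n : ℝ) * (rE α n : ℝ) = 1 := by
      exact_mod_cast hdet
    unfold fE gE
    linear_combination hc
  have hkey : 1 < |α - β| * ((rE α n : ℝ) * (sE α n : ℝ)) := by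
    have h2 : 2 / |α - β| < (rE α n : ℝ) + (sE α n : ℝ) := by
      calc 2 / |α - β| < (k₀ : ℝ) := hk₀
        _ ≤ _ := by linarith
    have h3 : 2 < |α - β| * ((rE α n : ℝ) + (sE α n : ℝ)) := by
      rw [div_lt_iff₀ habs] at h2
      nlinarith [h2]
    have hrs : (rE α n : ℝ) + (sE α n : ℝ) ≤ 2 * ((rE α n : ℝ) * (sE α n : ℝ)) := by
      nlinarith [mul_nonneg (sub_nonneg.mpr hr1R) (sub_nonneg.mpr hs1R)]
    have h4 := mul_le_mul_of_nonneg_left hrs habs.le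
    linarith
  have hXY : 0 < ((pE α n : ℝ) - β * (rE α n : ℝ)) * ((qE α n : ℝ) - β * (sE α n : ℝ)) :=
    CRAux.endgame α β (fE α n) (gE α n) (pE α n) (qE α n) (rE α n) (sE α n)
      hf hgneg rfl rfl hdetR hr1R hs1R hkey
  have hfg : fE α n * gE α n < 0 := mul_neg_of_pos_of_neg hf hgneg
  have hfact1 : ((Qval a h b (pE α n) (rE α n) : ℤ) : ℝ)
      = (a:ℝ) * (fE α n * ((pE α n : ℝ) - β * (rE α n : ℝ))) := by
    rw [hQcast]; unfold fE; ring
  have hfact2 : ((Qval a h b (qE α n) (sE α n) : ℤ) : ℝ)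
      = (a:ℝ) * (gE α n * ((qE α n : ℝ) - β * (sE α n : ℝ))) := by
    rw [hQcast]; unfold gE; ring
  have hreal : ((Qval a h b (pE α n) (rE α n) * Qval a h b (qE α n) (sE α n) : ℤ) : ℝ) < 0 := by
    rw [Int.cast_mul, hfact1, hfact2]
    have ha2 : 0 < (a:ℝ)^2 := by positivity
    nlinarith [mul_pos hXY ha2, hfg]
  exact_mod_cast hreal


end
end
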